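/- Let {Y_α}_{α∈A} be a finite family of Bernoulli random variables whose index set A admits a proper cover of size χ, and let X̄ = (1/|A|) Σ_{α∈A} Y_α. Then for every t > 0, P(X̄ ≥ E[X̄] + t) ≤ exp(−2 t² |A| / χ). -/

import Mathlib

open Real

lemma bern_key {p : ℝ} (hp0 : 0 ≤ p) (hp1 : p ≤ 1) (s : ℝ) :
    1 - p + p * exp s ≤ exp (s * p + s ^ 2 / 8) := by
  set u : ℝ → ℝ := fun s => 1 - p + p * exp s with hu_def
  have hu_pos : ∀ x, 0 < u x := by
    intro x
    rcases eq_or_lt_of_le hp0 with h | h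
    · simp [hu_def, ← h]
    · have : 0 < p * exp x := mul_pos h (exp_pos x)
      simp only [hu_def]; linarith
  have hu_deriv : ∀ x, HasDerivAt u (p * exp x) x := by
    intro x
    exact ((hasDerivAt_exp x).const_mul p).const_add (1 - p)
  set h : ℝ → ℝ := fun x => p + x / 4 - p * exp x / u x with hh_def
  have hh_deriv : ∀ x, HasDerivAt h
      (1 / 4 - (p * exp x * u x - p * exp x * (p * exp x)) / (u x) ^ 2) x := by
    intro x
    have h1 : HasDerivAt (fun x => p * exp x / u x)
        ((p * exp x * u x - p * exp x * (p * exp x)) / (u x) ^ 2) x :=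
      ((hasDerivAt_exp x).const_mul p).div (hu_deriv x) (hu_pos x).ne'
    exact (((hasDerivAt_id x).div_const 4).const_add p).sub h1
  have hh_deriv_nonneg : ∀ x, 0 ≤ 1 / 4 - (p * exp x * u x - p * exp x * (p * exp x)) / (u x) ^ 2 := by
    intro x
    rw [sub_nonneg, div_le_iff₀ (pow_pos (hu_pos x) 2)]
    have hx := exp_pos x
    have : (u x) ^ 2 = ((1 - p) + p * exp x) ^ 2 := by simp [hu_def]
    nlinarith [sq_nonneg ((1 - p) - p * exp x), mul_nonneg hp0 hx.le]
  have hh_mono : Monotone h :=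
    monotone_of_deriv_nonneg (fun x => (hh_deriv x).differentiableAt)
      (fun x => by rw [(hh_deriv x).deriv]; exact hh_deriv_nonneg x)
  have hh0 : h 0 = 0 := by simp [hh_def, hu_def]
  set g : ℝ → ℝ := fun x => x * p + x ^ 2 / 8 - log (u x) with hg_def
  have hg_deriv : ∀ x, HasDerivAt g (h x) x := by
    intro x
    have h1 : HasDerivAt (fun x => log (u x)) (p * exp x / u x) x :=
      (hu_deriv x).log (hu_pos x).ne'
    have h2 : HasDerivAt (fun x => x * p + x ^ 2 / 8) (p + x / 4) x := by
      have := ((hasDerivAt_id x).mul_const p).add (((hasDerivAt_pow 2 x)).div_const 8)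
      exact this.congr_deriv (by simp; ring)
    exact h2.sub h1
  have hg0 : g 0 = 0 := by simp [hg_def, hu_def]
  have hgs : 0 ≤ g s := by
    rcases le_or_gt 0 s with hs | hs
    · have : MonotoneOn g (Set.Ici 0) := by
        apply monotoneOn_of_deriv_nonneg (convex_Ici 0)
          (Continuous.continuousOn (by
            fun_prop (disch := intro x; exact (hu_pos x).ne')))
        · intro x _
          exact (hg_deriv x).differentiableAt.differentiableWithinAt
        · intro x hx
          rw [(hg_deriv x).deriv]
          rw [interior_Ici] at hx
          calc (0:ℝ) = h 0 := hh0.symm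
          _ ≤ h x := hh_mono (le_of_lt hx)
      have := this Set.self_mem_Ici hs hs
      rwa [hg0] at this
    · have : AntitoneOn g (Set.Iic 0) := by
        apply antitoneOn_of_deriv_nonpos (convex_Iic 0)
          (Continuous.continuousOn (by
            fun_prop (disch := intro x; exact (hu_pos x).ne')))
        · intro x _
          exact (hg_deriv x).differentiableAt.differentiableWithinAt
        · intro x hx
          rw [(hg_deriv x).deriv]
          rw [interior_Iic] at hx
          calc h x ≤ h 0 := hh_mono (le_of_lt hx)
          _ = 0 := hh0
      have := this hs.le Set.self_mem_Iic hs.le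
      rwa [hg0] at this
  have : log (u s) ≤ s * p + s ^ 2 / 8 := by
    simp only [hg_def] at hgs; linarith
  calc u s = exp (log (u s)) := (exp_log (hu_pos s)).symm
  _ ≤ exp (s * p + s ^ 2 / 8) := exp_le_exp.mpr this
open MeasureTheory ProbabilityTheory Real

section helpers
variable {Ω : Type*} [MeasurableSpace Ω] {μ : Measure Ω} [IsProbabilityMeasure μ]

lemma jch_exp_integrable {X : Ω → ℝ} (hX : Measurable X) {c : ℝ}
    (hb : ∀ ω, |X ω| ≤ c) (s : ℝ) : Integrable (fun ω => exp (s * X ω)) μ := by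
  refine (integrable_const (exp (|s| * c))).mono'
    ((hX.const_mul s).exp).aestronglyMeasurable ?_
  filter_upwards with ω
  rw [norm_eq_abs, abs_of_pos (exp_pos _)]
  refine exp_le_exp.mpr ?_
  calc s * X ω ≤ |s * X ω| := le_abs_self _
  _ = |s| * |X ω| := abs_mul _ _
  _ ≤ |s| * c := by
      have := hb ω
      have h0 : (0:ℝ) ≤ |X ω| := abs_nonneg _
      nlinarith [abs_nonneg s]

lemma jch_bounded_integrable {X : Ω → ℝ} (hX : Measurable X) {c : ℝ}
    (hb : ∀ ω, |X ω| ≤ c) : Integrable X μ := by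
  refine (integrable_const c).mono' hX.aestronglyMeasurable ?_
  filter_upwards with ω using by simpa using hb ω

lemma jch_bern_mgf {X : Ω → ℝ} (hX : Measurable X) (hB : ∀ ω, X ω = 0 ∨ X ω = 1) (s : ℝ) :
    mgf (fun ω => X ω - ∫ ω', X ω' ∂μ) μ s ≤ exp (s ^ 2 / 8) := by
  have hb : ∀ ω, |X ω| ≤ 1 := fun ω => by rcases hB ω with h | h <;> simp [h]
  have hXint : Integrable X μ := jch_bounded_integrable hX hb
  set p : ℝ := ∫ ω', X ω' ∂μ with hp_def
  have hp0 : 0 ≤ p := integral_nonneg fun ω => by rcases hB ω with h | h <;> simp [h]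
  have hp1 : p ≤ 1 := by
    calc p ≤ ∫ _ω', (1:ℝ) ∂μ := by
          refine integral_mono hXint (integrable_const 1) fun ω => ?_
          rcases hB ω with h | h <;> simp [h]
    _ = 1 := by simp
  have key : ∀ ω, exp (s * (X ω - p)) = exp (-(s * p)) * ((1 - X ω) + X ω * exp s) := by
    intro ω
    rcases hB ω with h | h
    · rw [h]; norm_num
    · have h1 : (1:ℝ) - 1 + 1 * exp s = exp s := by ring
      rw [h, h1, ← exp_add]; congr 1; ring
  have hmgf : mgf (fun ω => X ω - p) μ s = exp (-(s * p)) * ((1 - p) + p * exp s) := by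
    rw [mgf]
    simp only [key]
    rw [integral_const_mul]
    congr 1
    have hint1 : Integrable (fun a => 1 - X a) μ := (integrable_const 1).sub hXint
    have hint2 : Integrable (fun a => X a * exp s) μ := hXint.mul_const _
    rw [integral_add hint1 hint2, integral_sub (integrable_const 1) hXint]
    rw [integral_mul_const]
    simp [hp_def]
  rw [hmgf]
  calc exp (-(s * p)) * ((1 - p) + p * exp s)
      ≤ exp (-(s * p)) * exp (s * p + s ^ 2 / 8) := by
        have := bern_key hp0 hp1 s
        have h2 : (0:ℝ) < exp (-(s * p)) := exp_pos _
        nlinarith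
  _ = exp (s ^ 2 / 8) := by rw [← exp_add]; ring_nf

end helpers
/-- Chromatic Hoeffding inequality for means of Bernoulli random variables: if the
finite index set `A` admits a proper cover of size `χ`, then the empirical mean
`X̄ = (1/|A|) ∑ Y α` satisfies `P(X̄ ≥ E X̄ + t) ≤ exp (-2 t² |A| / χ)`. -/
theorem janson_chromatic_hoeffding_bernoulli_mean
    {Ω : Type*} [MeasurableSpace Ω] (μ : Measure Ω) [IsProbabilityMeasure μ]
    {A : Type*} [Fintype A] (Y : A → Ω → ℝ) (hY : ∀ α, Measurable (Y α))
    (hBer : ∀ α ω, Y α ω = 0 ∨ Y α ω = 1)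
    (χ : ℕ) (C : Fin χ → Set A) (hcover : (⋃ j, C j) = Set.univ)
    (hindep : ∀ j, iIndepFun
      (fun α : C j => Y (α : A)) μ)
    (t : ℝ) (ht : 0 < t) :
    (μ {ω | (∫ ω', ((∑ α, Y α ω') / Fintype.card A) ∂μ) + t
        ≤ (∑ α, Y α ω) / Fintype.card A}).toReal ≤
      Real.exp (-2 * t ^ 2 * Fintype.card A / χ) := by
  classical
  rcases isEmpty_or_nonempty A with hA | hA
  · simp only [Finset.univ_eq_empty, Finset.sum_empty, zero_div, integral_zero, zero_add]
    have hempty : {ω : Ω | t ≤ (0:ℝ)} = ∅ := by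
      ext ω; simp only [Set.mem_setOf_eq, Set.mem_empty_iff_false, iff_false, not_le]; linarith
    rw [hempty]
    simp only [measure_empty, ENNReal.toReal_zero]
    positivity
  have hχ : 0 < χ := by
    by_contra h
    push_neg at h
    obtain ⟨a⟩ := hA
    have ha : a ∈ ⋃ j, C j := by rw [hcover]; trivial
    obtain ⟨j, _⟩ := Set.mem_iUnion.mp ha
    exact absurd j.isLt (by omega)
  set n := Fintype.card A with hn_def
  have hn : 0 < n := Fintype.card_pos
  have hnR : (0:ℝ) < n := by exact_mod_cast hn
  have hχR : (0:ℝ) < χ := by exact_mod_cast hχ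
  have hYb : ∀ α ω, |Y α ω| ≤ 1 := fun α ω => by rcases hBer α ω with h | h <;> simp [h]
  have hYint : ∀ α, Integrable (Y α) μ := fun α => jch_bounded_integrable (hY α) (hYb α)
  set p : A → ℝ := fun α => ∫ ω', Y α ω' ∂μ with hp_def
  have hp0 : ∀ α, 0 ≤ p α := fun α =>
    integral_nonneg fun ω => by rcases hBer α ω with h | h <;> simp [h]
  have hp1 : ∀ α, p α ≤ 1 := by
    intro α
    calc p α ≤ ∫ _ω', (1:ℝ) ∂μ := by
          refine integral_mono (hYint α) (integrable_const 1) fun ω => ?_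
          rcases hBer α ω with h | h <;> simp [h]
    _ = 1 := by simp
  set W : A → Ω → ℝ := fun α ω => Y α ω - p α with hW_def
  have hWm : ∀ α, Measurable (W α) := fun α => (hY α).sub_const _
  have hWb : ∀ α ω, |W α ω| ≤ 1 := by
    intro α ω
    rw [abs_le]
    rcases hBer α ω with h | h <;>
      (constructor <;> simp only [hW_def, h] <;> [linarith [hp1 α]; linarith [hp0 α]])
  set S : Ω → ℝ := fun ω => ∑ α, W α ω with hS_def
  have hSm : Measurable S := Finset.measurable_sum _ fun α _ => hWm α
  have hSb : ∀ ω, |S ω| ≤ n := by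
    intro ω
    calc |∑ α, W α ω| ≤ ∑ α, |W α ω| := Finset.abs_sum_le_sum_abs _ _
    _ ≤ ∑ _α : A, (1:ℝ) := Finset.sum_le_sum fun α _ => hWb α ω
    _ = n := by simp [hn_def]
  -- coloring
  have hmem : ∀ α : A, ∃ j, α ∈ C j := by
    intro α
    have : α ∈ ⋃ j, C j := by rw [hcover]; trivial
    exact Set.mem_iUnion.mp this
  choose c hc using hmem
  set B : Fin χ → Finset A := fun j => Finset.univ.filter (fun α => c α = j) with hB_def
  set m : Fin χ → ℕ := fun j => (B j).card with hm_def
  have hm_sum : ∑ j, m j = n := by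
    simp only [hm_def, hB_def, hn_def]
    rw [← Finset.card_univ]
    exact (Finset.card_eq_sum_card_fiberwise fun a _ => Finset.mem_univ (c a)).symm
  set Z : Fin χ → Ω → ℝ := fun j ω => ∑ α ∈ B j, W α ω with hZ_def
  have hZm : ∀ j, Measurable (Z j) := fun j => Finset.measurable_sum _ fun α _ => hWm α
  have hZb : ∀ j ω, |Z j ω| ≤ m j := by
    intro j ω
    calc |∑ α ∈ B j, W α ω| ≤ ∑ α ∈ B j, |W α ω| := Finset.abs_sum_le_sum_abs _ _
    _ ≤ ∑ _α ∈ B j, (1:ℝ) := Finset.sum_le_sum fun α _ => hWb α ω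
    _ = m j := by simp [hm_def]
  set J : Finset (Fin χ) := Finset.univ.filter (fun j => (B j).Nonempty) with hJ_def
  set q : Fin χ → ℝ := fun j => (m j : ℝ) / n with hq_def
  have hBempty : ∀ j, j ∉ J → B j = ∅ := fun j hj =>
    Finset.not_nonempty_iff_eq_empty.mp (by simpa [hJ_def] using hj)
  have hq_pos : ∀ j ∈ J, 0 < q j := by
    intro j hj
    have : 0 < m j := Finset.card_pos.mpr (Finset.mem_filter.mp hj).2
    exact div_pos (by exact_mod_cast this) hnR
  have hq_sum : ∑ j ∈ J, q j = 1 := by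
    simp only [hq_def]
    rw [← Finset.sum_div]
    rw [Finset.sum_subset (Finset.subset_univ J) (fun j _ hj => by
      simp [hm_def, hBempty j hj])]
    rw [← Nat.cast_sum, hm_sum]
    exact div_self hnR.ne'
  have hZ_sumJ : ∀ ω, ∑ j ∈ J, Z j ω = S ω := by
    intro ω
    rw [Finset.sum_subset (Finset.subset_univ J) (fun j _ hj => by
      simp [hZ_def, hBempty j hj])]
    simpa only [hZ_def, hB_def, hS_def] using
      Finset.sum_fiberwise_of_maps_to (fun a _ => Finset.mem_univ (c a)) (fun α => W α ω)
  -- mgf bound per color class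
  have hZ_mgf : ∀ j ∈ J, ∀ s : ℝ, mgf (Z j) μ s ≤ Real.exp (m j * s ^ 2 / 8) := by
    intro j _hj s
    haveI : Fintype ↥(C j) := Fintype.ofFinite _
    set sj : Finset ↥(C j) := Finset.univ.filter (fun a => c ↑a = j) with hsj_def
    have hBj : B j = sj.image Subtype.val := by
      ext α
      simp only [hB_def, hsj_def, Finset.mem_filter, Finset.mem_univ, true_and,
        Finset.mem_image]
      constructor
      · intro h
        exact ⟨⟨α, h ▸ hc α⟩, by simpa using h⟩
      · rintro ⟨a, ha, rfl⟩
        simpa using ha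
    have hcard : sj.card = m j := by
      simp only [hm_def]
      rw [hBj, Finset.card_image_of_injective _ Subtype.val_injective]
    have hWindep : iIndepFun
        (fun a : C j => fun ω => Y (↑a) ω - p ↑a) μ :=
      (hindep j).comp (fun (a : C j) (x : ℝ) => x - p ↑a)
        (fun a => measurable_id.sub_const _)
    have hprod := hWindep.mgf_sum (fun a => (hY ↑a).sub_const _) sj (t := s)
    have hZeq : mgf (Z j) μ s = mgf (∑ a ∈ sj, fun ω => Y (↑a) ω - p ↑a) μ s := by
      congr 1
      funext ω
      rw [Finset.sum_apply]
      simp only [hZ_def, hW_def, hBj]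
      exact Finset.sum_image fun a _ b _ h => Subtype.ext h
    rw [hZeq, hprod]
    calc ∏ a ∈ sj, mgf (fun ω => Y (↑a) ω - p ↑a) μ s
        ≤ ∏ _a ∈ sj, Real.exp (s ^ 2 / 8) := by
          refine Finset.prod_le_prod (fun a _ => mgf_nonneg) (fun a _ => ?_)
          simpa only [hp_def] using jch_bern_mgf (hY ↑a) (hBer ↑a) s
    _ = Real.exp (m j * s ^ 2 / 8) := by
        rw [Finset.prod_const, hcard, ← Real.exp_nat_mul]
        congr 1; ring
  -- mgf bound for the full sum
  have hmgf_S : ∀ l : ℝ, mgf S μ l ≤ Real.exp (χ * l ^ 2 * n / 8) := by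
    intro l
    have hint_S : Integrable (fun ω => Real.exp (l * S ω)) μ := jch_exp_integrable hSm hSb l
    have h1 : ENNReal.ofReal (mgf S μ l) = ∫⁻ ω, ENNReal.ofReal (Real.exp (l * S ω)) ∂μ :=
      MeasureTheory.ofReal_integral_eq_lintegral_ofReal hint_S
        (ae_of_all _ fun ω => (Real.exp_pos _).le)
    have hfac : ∀ (x : ℝ), ∀ j ∈ J,
        (ENNReal.ofReal (Real.exp (x / q j))) ^ (q j) = ENNReal.ofReal (Real.exp x) := by
      intro x j hj
      rw [ENNReal.ofReal_rpow_of_pos (Real.exp_pos _), ← Real.exp_mul]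
      congr 1
      rw [div_mul_cancel₀ x (hq_pos j hj).ne']
    have h2 : ∀ ω, ENNReal.ofReal (Real.exp (l * S ω)) =
        ∏ j ∈ J, (ENNReal.ofReal (Real.exp ((l / q j) * Z j ω))) ^ (q j) := by
      intro ω
      have : ∀ j ∈ J, (ENNReal.ofReal (Real.exp ((l / q j) * Z j ω))) ^ (q j)
          = ENNReal.ofReal (Real.exp (l * Z j ω)) := by
        intro j hj
        have : (l / q j) * Z j ω = (l * Z j ω) / q j := by ring
        rw [this]
        exact hfac _ j hj
      rw [Finset.prod_congr rfl this,
        ← ENNReal.ofReal_prod_of_nonneg (fun j _ => (Real.exp_pos _).le),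
        ← Real.exp_sum, ← Finset.mul_sum, hZ_sumJ ω]
    have h3 : ∫⁻ ω, ∏ j ∈ J, (ENNReal.ofReal (Real.exp ((l / q j) * Z j ω))) ^ (q j) ∂μ
        ≤ ∏ j ∈ J, (∫⁻ ω, ENNReal.ofReal (Real.exp ((l / q j) * Z j ω)) ∂μ) ^ (q j) :=
      ENNReal.lintegral_prod_norm_pow_le J
        (fun j _ => (((hZm j).const_mul _).exp.ennreal_ofReal).aemeasurable)
        hq_sum (fun j hj => (hq_pos j hj).le)
    have h4 : ∀ j ∈ J, ∫⁻ ω, ENNReal.ofReal (Real.exp ((l / q j) * Z j ω)) ∂μ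
        = ENNReal.ofReal (mgf (Z j) μ (l / q j)) := fun j _ =>
      (MeasureTheory.ofReal_integral_eq_lintegral_ofReal
        (jch_exp_integrable (hZm j) (hZb j) _)
        (ae_of_all _ fun ω => (Real.exp_pos _).le)).symm
    have h5 : ∏ j ∈ J, (ENNReal.ofReal (mgf (Z j) μ (l / q j))) ^ (q j)
        ≤ ∏ j ∈ J, (ENNReal.ofReal (Real.exp ((m j : ℝ) * (l / q j) ^ 2 / 8))) ^ (q j) :=
      Finset.prod_le_prod' fun j hj =>
        ENNReal.rpow_le_rpow (ENNReal.ofReal_le_ofReal (hZ_mgf j hj _)) (hq_pos j hj).le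
    have h6 : ∏ j ∈ J, (ENNReal.ofReal (Real.exp ((m j : ℝ) * (l / q j) ^ 2 / 8))) ^ (q j)
        = ENNReal.ofReal (Real.exp (∑ j ∈ J, (m j : ℝ) * (l / q j) ^ 2 / 8 * q j)) := by
      have : ∀ j ∈ J, (ENNReal.ofReal (Real.exp ((m j : ℝ) * (l / q j) ^ 2 / 8))) ^ (q j)
          = ENNReal.ofReal (Real.exp ((m j : ℝ) * (l / q j) ^ 2 / 8 * q j)) := by
        intro j hj
        rw [ENNReal.ofReal_rpow_of_pos (Real.exp_pos _), ← Real.exp_mul]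
      rw [Finset.prod_congr rfl this,
        ← ENNReal.ofReal_prod_of_nonneg (fun j _ => (Real.exp_pos _).le), ← Real.exp_sum]
    have h7 : ∑ j ∈ J, (m j : ℝ) * (l / q j) ^ 2 / 8 * q j = J.card * ((n : ℝ) * l ^ 2 / 8) := by
      rw [Finset.sum_congr rfl (fun j hj => ?_), Finset.sum_const, nsmul_eq_mul]
      have hqj := hq_pos j hj
      have hmj : (m j : ℝ) = q j * n := by
        simp only [hq_def]; field_simp
      rw [hmj]
      field_simp
    have h8 : (J.card : ℝ) * ((n : ℝ) * l ^ 2 / 8) ≤ χ * l ^ 2 * n / 8 := by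
      have hJc : (J.card : ℝ) ≤ χ := by
        exact_mod_cast (Finset.card_le_univ J).trans_eq (by simp)
      have h0 : (0:ℝ) ≤ (n : ℝ) * l ^ 2 / 8 := by positivity
      nlinarith [mul_le_mul_of_nonneg_right hJc h0]
    have hchain : ENNReal.ofReal (mgf S μ l) ≤ ENNReal.ofReal (Real.exp (χ * l ^ 2 * n / 8)) := by
      rw [h1]
      calc ∫⁻ ω, ENNReal.ofReal (Real.exp (l * S ω)) ∂μ
          = ∫⁻ ω, ∏ j ∈ J, (ENNReal.ofReal (Real.exp ((l / q j) * Z j ω))) ^ (q j) ∂μ :=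
            lintegral_congr fun ω => h2 ω
      _ ≤ ∏ j ∈ J, (∫⁻ ω, ENNReal.ofReal (Real.exp ((l / q j) * Z j ω)) ∂μ) ^ (q j) := h3
      _ = ∏ j ∈ J, (ENNReal.ofReal (mgf (Z j) μ (l / q j))) ^ (q j) :=
            Finset.prod_congr rfl fun j hj => by rw [h4 j hj]
      _ ≤ ∏ j ∈ J, (ENNReal.ofReal (Real.exp ((m j : ℝ) * (l / q j) ^ 2 / 8))) ^ (q j) := h5
      _ = ENNReal.ofReal (Real.exp (∑ j ∈ J, (m j : ℝ) * (l / q j) ^ 2 / 8 * q j)) := h6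
      _ ≤ ENNReal.ofReal (Real.exp (χ * l ^ 2 * n / 8)) := by
            refine ENNReal.ofReal_le_ofReal (Real.exp_le_exp.mpr ?_)
            rw [h7]; exact h8
    exact (ENNReal.ofReal_le_ofReal_iff (Real.exp_pos _).le).mp hchain
  -- reduce the event
  have hES : (∫ ω', (∑ α, Y α ω') / (n : ℝ) ∂μ) = (∑ α, p α) / n := by
    rw [integral_div, integral_finset_sum _ fun α _ => hYint α]
  have hSsum : ∀ ω, S ω = (∑ α, Y α ω) - ∑ α, p α := by
    intro ω
    simp only [hS_def, hW_def, Finset.sum_sub_distrib]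
  have hset_eq : {ω : Ω | (∫ ω', (∑ α, Y α ω') / (n : ℝ) ∂μ) + t ≤ (∑ α, Y α ω) / n}
      = {ω : Ω | (n : ℝ) * t ≤ S ω} := by
    ext ω
    simp only [Set.mem_setOf_eq, hES]
    have key : ((∑ α, p α) / (n:ℝ) + t ≤ (∑ α, Y α ω) / n)
        ↔ ((∑ α, p α) + t * n ≤ ∑ α, Y α ω) := by
      rw [← sub_nonneg, ← sub_nonneg (b := (∑ α, p α) + t * n)]
      have : (∑ α, Y α ω) / (n:ℝ) - ((∑ α, p α) / n + t)
          = ((∑ α, Y α ω) - ((∑ α, p α) + t * n)) / n := by field_simp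
      rw [this, le_div_iff₀ hnR, zero_mul]
    rw [key]
    have hs := hSsum ω
    constructor <;> intro h' <;> linarith
  rw [hset_eq]
  calc (μ {ω : Ω | (n : ℝ) * t ≤ S ω}).toReal
      ≤ Real.exp (-(4 * t / χ) * ((n:ℝ) * t)) * mgf S μ (4 * t / χ) :=
        measure_ge_le_exp_mul_mgf ((n:ℝ) * t) (by positivity) (jch_exp_integrable hSm hSb _)
  _ ≤ Real.exp (-(4 * t / χ) * ((n:ℝ) * t)) * Real.exp (χ * (4 * t / χ) ^ 2 * n / 8) :=
        mul_le_mul_of_nonneg_left (hmgf_S _) (Real.exp_pos _).le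
  _ = Real.exp (-2 * t ^ 2 * n / χ) := by
        rw [← Real.exp_add]
        congr 1
        field_simp
        ring
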